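/- Let H ∈ (0,1) and B a real fBm. There is a constant C depending only on H such that for all ε > 0 and all 0 < s < t with t − s > 0, |Cov(D⁰_ε B_t, B_t − B_s)| ≤ C |t−s|^{2H−1}, where D⁰_ε B_t = (B_{t+ε} − B_{t−ε})/(2ε). -/

import Mathlib

open MeasureTheory

/-- Covariance function of real fractional Brownian motion with Hurst index `H`. -/
noncomputable def fbmCov (H s t : ℝ) : ℝ :=
  (|s| ^ (2 * H) + |t| ^ (2 * H) - |s - t| ^ (2 * H)) / 2

/-- `B` is a (two-sided) real fractional Brownian motion with Hurst index `H`: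
a centered Gaussian process with covariance `fbmCov H`, characterized by its
finite-dimensional characteristic functions. -/
def IsFBM1 {Ω : Type*} [MeasurableSpace Ω] (H : ℝ) (P : MeasureTheory.Measure Ω)
    (B : ℝ → Ω → ℝ) : Prop :=
  ∀ (n : ℕ) (t : Fin n → ℝ) (c : Fin n → ℝ),
    ∫ ω, Complex.exp (Complex.I * ((∑ i, c i * B (t i) ω : ℝ) : ℂ)) ∂P =
      Complex.exp (-(((∑ i, ∑ i', c i * c i' * fbmCov H (t i) (t i') : ℝ) : ℂ)) / 2)


open Real Filter Topology

section Aux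

variable {Ω : Type*} [MeasurableSpace Ω] {P : Measure Ω} {H : ℝ} {B : ℝ → Ω → ℝ}


lemma anal_nonneg (a d ε : ℝ) (ha0 : 0 < a) (hd : 0 < d) (hε : 0 < ε) :
    0 ≤ (d + ε) ^ a - |d - ε| ^ a := by
  have h1 : |d - ε| ≤ d + ε := by
    rw [abs_sub_le_iff]; constructor <;> linarith
  have := Real.rpow_le_rpow (abs_nonneg _) h1 ha0.le
  linarith

lemma mvt_rpow {a u v : ℝ} (ha : 0 < a) (h0 : 0 ≤ u) (huv : u < v)
    (h' : u ≠ 0 ∨ 1 ≤ a) :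
    ∃ ξ ∈ Set.Ioo u v, v ^ a - u ^ a = a * ξ ^ (a - 1) * (v - u) := by
  have hcont : ContinuousOn (fun x : ℝ => x ^ a) (Set.Icc u v) := by
    intro x hx
    exact (Real.continuousAt_rpow_const x a (Or.inr ha.le)).continuousWithinAt
  have hderiv : ∀ x ∈ Set.Ioo u v, HasDerivAt (fun x : ℝ => x ^ a) (a * x ^ (a - 1)) x := by
    intro x hx
    rcases h' with h | h
    · exact Real.hasDerivAt_rpow_const (Or.inl (by nlinarith [hx.1, h0.lt_of_ne (Ne.symm h)]))
    · exact Real.hasDerivAt_rpow_const (Or.inr h)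
  obtain ⟨ξ, hξ, heq⟩ := exists_hasDerivAt_eq_slope (fun x : ℝ => x ^ a)
    (fun x => a * x ^ (a - 1)) huv hcont hderiv
  refine ⟨ξ, hξ, ?_⟩
  have hvu : v - u ≠ 0 := by intro h; rw [sub_eq_zero] at h; exact absurd h (ne_of_gt huv)
  field_simp at heq
  linarith [heq]

lemma two_rpow_le (b : ℝ) (hb : b ≤ 1) : (2:ℝ) ^ b ≤ 2 := by
  calc (2:ℝ)^b ≤ 2^(1:ℝ) := Real.rpow_le_rpow_of_exponent_le (by norm_num) hb
  _ = 2 := Real.rpow_one 2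

lemma anal_bound (a d ε : ℝ) (ha0 : 0 < a) (ha2 : a ≤ 2) (hd : 0 < d) (hε : 0 < ε) :
    (d + ε) ^ a - |d - ε| ^ a ≤ 18 * ε * d ^ (a - 1) := by
  have hd1 : (0:ℝ) ≤ d^(a-1) := Real.rpow_nonneg hd.le _
  have he1 : (0:ℝ) ≤ ε^(a-1) := Real.rpow_nonneg hε.le _
  rcases le_or_gt 1 a with ha1 | ha1
  · -- a ≥ 1 : MVT on [|d-ε|, d+ε]
    have h1 : |d - ε| < d + ε := by
      rw [abs_sub_lt_iff]; constructor <;> linarith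
    obtain ⟨ξ, hξ, heq⟩ := mvt_rpow ha0 (abs_nonneg _) h1 (Or.inr ha1)
    rw [heq]
    have hξpos : 0 < ξ := lt_of_le_of_lt (abs_nonneg _) hξ.1
    have hξn : (0:ℝ) ≤ ξ^(a-1) := Real.rpow_nonneg hξpos.le _
    rcases le_total ε d with hle | hle
    · have hdiff : d + ε - |d - ε| = 2 * ε := by
        rw [abs_of_nonneg (by linarith)]; ring
      rw [hdiff]
      have hξ2 : ξ ^ (a-1) ≤ (2*d) ^ (a-1) :=
        Real.rpow_le_rpow hξpos.le (by linarith [hξ.2]) (by linarith)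
      rw [Real.mul_rpow (by norm_num) hd.le] at hξ2
      have h2 : (2:ℝ)^(a-1) ≤ 2 := two_rpow_le _ (by linarith)
      have hξ3 : ξ^(a-1) ≤ 2 * d^(a-1) := by nlinarith
      have hX : a * ξ^(a-1) ≤ 4 * d^(a-1) := by nlinarith
      have := mul_le_mul_of_nonneg_right hX (by linarith : (0:ℝ) ≤ 2*ε)
      nlinarith [mul_nonneg hd1 hε.le]
    · have hdiff : d + ε - |d - ε| = 2 * d := by
        rw [abs_of_nonpos (by linarith)]; ring
      rw [hdiff]
      have hξ2 : ξ ^ (a-1) ≤ (2*ε) ^ (a-1) :=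
        Real.rpow_le_rpow hξpos.le (by linarith [hξ.2]) (by linarith)
      rw [Real.mul_rpow (by norm_num) hε.le] at hξ2
      have h2 : (2:ℝ)^(a-1) ≤ 2 := two_rpow_le _ (by linarith)
      have hξ3 : ξ^(a-1) ≤ 2 * ε^(a-1) := by nlinarith
      have hX : a * ξ^(a-1) ≤ 4 * ε^(a-1) := by nlinarith
      -- d * ε^(a-1) ≤ ε * d^(a-1)
      have h3 : d^(a-1) * d^(2-a) = d := by rw [← Real.rpow_add hd]; norm_num
      have h5 : ε^(2-a) * ε^(a-1) = ε := by rw [← Real.rpow_add hε]; norm_num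
      have h4 : d^(2-a) ≤ ε^(2-a) := Real.rpow_le_rpow hd.le hle (by linarith)
      have h6 : d^(2-a) * ε^(a-1) ≤ ε :=
        calc d^(2-a) * ε^(a-1) ≤ ε^(2-a) * ε^(a-1) := mul_le_mul_of_nonneg_right h4 he1
        _ = ε := h5
      have hkey : d * ε^(a-1) ≤ ε * d^(a-1) :=
        calc d * ε^(a-1) = d^(a-1) * d^(2-a) * ε^(a-1) := by rw [h3]
        _ = d^(a-1) * (d^(2-a) * ε^(a-1)) := by ring
        _ ≤ d^(a-1) * ε := mul_le_mul_of_nonneg_left h6 hd1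
        _ = ε * d^(a-1) := by ring
      have := mul_le_mul_of_nonneg_right hX (by linarith : (0:ℝ) ≤ 2*d)
      nlinarith [mul_nonneg hd1 hε.le, mul_nonneg he1 hd.le]
  · -- a < 1
    rcases le_or_gt ε (d/2) with hle | hle
    · have h0 : (0:ℝ) ≤ d - ε := by linarith
      have h1 : d - ε < d + ε := by linarith
      rw [abs_of_nonneg h0]
      obtain ⟨ξ, hξ, heq⟩ := mvt_rpow ha0 h0 h1 (Or.inl (by intro h; linarith))
      rw [heq]
      have hξpos : 0 < ξ := lt_of_lt_of_le (by linarith : (0:ℝ) < d - ε) hξ.1.le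
      have hξn : (0:ℝ) ≤ ξ^(a-1) := Real.rpow_nonneg hξpos.le _
      have hξ2 : ξ ^ (a-1) ≤ (d/2) ^ (a-1) :=
        Real.rpow_le_rpow_of_nonpos (by linarith) (by linarith [hξ.1]) (by linarith)
      have h2d : (d/2) ^ (a-1) = d^(a-1) / 2^(a-1) := Real.div_rpow hd.le (by norm_num) (a-1)
      have h7 : (1:ℝ)/2 ≤ 2^(a-1) := by
        have : (2:ℝ)^(-1:ℝ) ≤ 2^(a-1) := Real.rpow_le_rpow_of_exponent_le (by norm_num) (by linarith)
        rw [Real.rpow_neg_one] at this; linarith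
      have h2pos : (0:ℝ) < 2^(a-1) := by linarith
      have hξ3 : ξ^(a-1) ≤ 2 * d^(a-1) := by
        rw [h2d] at hξ2
        have hdd : d^(a-1)/2^(a-1) ≤ 2*d^(a-1) := by
          rw [div_le_iff₀ h2pos]; nlinarith
        linarith
      have hX : a * ξ^(a-1) ≤ 2 * d^(a-1) := by nlinarith
      have := mul_le_mul_of_nonneg_right hX (by linarith : (0:ℝ) ≤ 2*ε)
      nlinarith [mul_nonneg hd1 hε.le]
    · -- ε > d/2 : crude bound
      have hN : (d+ε)^a - |d-ε|^a ≤ (3*ε)^a := by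
        have h1 : (d+ε)^a ≤ (3*ε)^a := Real.rpow_le_rpow (by linarith) (by linarith) ha0.le
        have h2 : (0:ℝ) ≤ |d-ε|^a := Real.rpow_nonneg (abs_nonneg _) _
        linarith
      have h3 : (3*ε)^a = 3^a * ε^a := Real.mul_rpow (by norm_num) hε.le
      have h4 : (3:ℝ)^a ≤ 9 := by
        calc (3:ℝ)^a ≤ 3^(2:ℝ) := Real.rpow_le_rpow_of_exponent_le (by norm_num) ha2
        _ = 9 := by
          rw [show (2:ℝ) = ((2:ℕ):ℝ) by norm_num, Real.rpow_natCast]; norm_num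
      have h5 : (2*ε)^(a-1) ≤ d^(a-1) :=
        Real.rpow_le_rpow_of_nonpos hd (by linarith) (by linarith)
      rw [Real.mul_rpow (by norm_num) hε.le] at h5
      have h7 : (1:ℝ)/2 ≤ 2^(a-1) := by
        have : (2:ℝ)^(-1:ℝ) ≤ 2^(a-1) := Real.rpow_le_rpow_of_exponent_le (by norm_num) (by linarith)
        rw [Real.rpow_neg_one] at this; linarith
      have h8 : ε^a = ε * ε^(a-1) := by
        nth_rewrite 1 [show a = 1 + (a-1) by ring]
        rw [Real.rpow_add hε, Real.rpow_one]
      have hea : (0:ℝ) ≤ ε^a := Real.rpow_nonneg hε.le _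
      -- N ≤ 9 ε^a = 9 ε ε^(a-1) ≤ 18 ε (2^(a-1) ε^(a-1)) ≤ 18 ε d^(a-1)
      have h9 : ε^(a-1) ≤ 2 * (2^(a-1) * ε^(a-1)) := by nlinarith
      have h10 : 2^(a-1) * ε^(a-1) ≤ d^(a-1) := h5
      have h11 := mul_le_mul_of_nonneg_left h9 (by linarith : (0:ℝ) ≤ 9*ε)
      have h12 := mul_le_mul_of_nonneg_left h10 (by linarith : (0:ℝ) ≤ 18*ε)
      calc (d+ε)^a - |d-ε|^a ≤ 9 * ε^a := by nlinarith
      _ = 9 * ε * ε^(a-1) := by rw [h8]; ring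
      _ ≤ 18 * ε * (2^(a-1) * ε^(a-1)) := by linarith [mul_le_mul_of_nonneg_left h9 (by linarith : (0:ℝ) ≤ 9*ε)]
      _ ≤ 18 * ε * d^(a-1) := by linarith [mul_le_mul_of_nonneg_left h10 (by linarith : (0:ℝ) ≤ 18*ε)]


lemma fbm_int_exp (hB : IsFBM1 H P B) (n : ℕ) (t c : Fin n → ℝ) :
    Integrable (fun ω => Complex.exp (Complex.I * ((∑ i, c i * B (t i) ω : ℝ) : ℂ))) P := by
  by_contra hni
  have h := hB n t c
  rw [integral_undef hni] at h
  exact Complex.exp_ne_zero _ h.symm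

lemma fbm_aemeasurable (hB : IsFBM1 H P B) (a : ℝ) : AEMeasurable (B a) P := by
  have hint : ∀ z : ℝ,
      Integrable (fun ω => Complex.exp (Complex.I * ((z * B a ω : ℝ) : ℂ))) P := by
    intro z
    have := fbm_int_exp hB 1 (fun _ => a) (fun _ => z)
    simpa using this
  have hmeas : ∀ k : ℕ,
      AEMeasurable (fun ω => (2:ℝ)^k *
        Complex.arg (Complex.exp (Complex.I * (((2:ℝ)⁻¹^k * B a ω : ℝ) : ℂ)))) P := by
    intro k
    exact (Complex.measurable_arg.comp_aemeasurable
      (hint ((2:ℝ)⁻¹^k)).aestronglyMeasurable.aemeasurable).const_mul _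
  refine aemeasurable_of_tendsto_metrizable_ae' hmeas ?_
  refine ae_of_all _ fun ω => ?_
  have hev : ∀ᶠ k : ℕ in atTop,
      (2:ℝ)^k * Complex.arg (Complex.exp (Complex.I * (((2:ℝ)⁻¹^k * B a ω : ℝ) : ℂ)))
        = B a ω := by
    have h2 : Tendsto (fun k : ℕ => (2:ℝ)^k) atTop atTop :=
      tendsto_pow_atTop_atTop_of_one_lt (by norm_num)
    filter_upwards [h2.eventually_gt_atTop (|B a ω| / π)] with k hk
    set x : ℝ := (2:ℝ)⁻¹^k * B a ω with hx
    have h2k : (0:ℝ) < 2^k := by positivity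
    have hxlt : |x| < π := by
      rw [hx, abs_mul, _root_.abs_pow, abs_inv]
      rw [div_lt_iff₀ Real.pi_pos] at hk
      calc |(2:ℝ)|⁻¹ ^ k * |B a ω| < |(2:ℝ)|⁻¹^k * ((2:ℝ)^k * π) := by
            refine mul_lt_mul_of_pos_left hk ?_
            rw [_root_.abs_two]; positivity
      _ = π := by rw [_root_.abs_two]; field_simp; rw [← mul_pow]; norm_num
    have hmem : x ∈ Set.Ioc (-π) π := ⟨(abs_lt.mp hxlt).1, ((abs_lt.mp hxlt).2).le⟩
    have harg : Complex.arg (Complex.exp (Complex.I * (x : ℂ))) = x := by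
      rw [mul_comm, Complex.exp_mul_I]
      exact Complex.arg_cos_add_sin_mul_I hmem
    rw [harg, hx]
    rw [← mul_assoc, ← mul_pow]
    norm_num
  exact tendsto_const_nhds.congr' (hev.mono fun k hk => hk.symm)


-- characteristic function of a linear combination, real (cosine) form
lemma fbm_cos (hB : IsFBM1 H P B) [IsProbabilityMeasure P] (n : ℕ) (t c : Fin n → ℝ)
    (z : ℝ) :
    ∫ ω, Real.cos (z * (∑ i, c i * B (t i) ω)) ∂P =
      Real.exp (-((∑ i, ∑ i', c i * c i' * fbmCov H (t i) (t i')) * z^2)/2) := by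
  have h := hB n t (fun i => z * c i)
  have hsum : ∀ ω, ∑ i, (z * c i) * B (t i) ω = z * ∑ i, c i * B (t i) ω := fun ω => by
    rw [Finset.mul_sum]; exact Finset.sum_congr rfl fun i _ => by ring
  have hQ : ∑ i, ∑ i', (z * c i) * (z * c i') * fbmCov H (t i) (t i')
      = (∑ i, ∑ i', c i * c i' * fbmCov H (t i) (t i')) * z^2 := by
    rw [Finset.sum_mul]
    refine Finset.sum_congr rfl fun i _ => ?_
    rw [Finset.sum_mul]
    exact Finset.sum_congr rfl fun i' _ => by ring
  rw [show (fun ω => Complex.exp (Complex.I * ((∑ i, (z * c i) * B (t i) ω : ℝ) : ℂ)))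
      = fun ω => Complex.exp (Complex.I * ((z * ∑ i, c i * B (t i) ω : ℝ) : ℂ)) from
    funext fun ω => by rw [hsum ω], hQ] at h
  have hint := fbm_int_exp hB n t (fun i => z * c i)
  rw [show (fun ω => Complex.exp (Complex.I * ((∑ i, (z * c i) * B (t i) ω : ℝ) : ℂ)))
      = fun ω => Complex.exp (Complex.I * ((z * ∑ i, c i * B (t i) ω : ℝ) : ℂ)) from
    funext fun ω => by rw [hsum ω]] at hint
  have h2 : ∫ ω, Real.cos (z * ∑ i, c i * B (t i) ω) ∂P
      = ∫ ω, RCLike.re (Complex.exp (Complex.I * ((z * ∑ i, c i * B (t i) ω : ℝ) : ℂ))) ∂P := by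
    refine integral_congr_ae (ae_of_all _ fun ω => ?_)
    simp only []
    rw [RCLike.re_to_complex, mul_comm Complex.I, Complex.exp_ofReal_mul_I_re]
  rw [h2, integral_re hint, RCLike.re_to_complex, h,
    show -(((∑ i, ∑ i', c i * c i' * fbmCov H (t i) (t i')) * z ^ 2 : ℝ) : ℂ) / 2
        = ((-((∑ i, ∑ i', c i * c i' * fbmCov H (t i) (t i')) * z ^ 2) / 2 : ℝ) : ℂ) by
      push_cast; ring, ← Complex.ofReal_exp, Complex.ofReal_re]

lemma fbm_cos_integrable (hB : IsFBM1 H P B) [IsProbabilityMeasure P]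
    (n : ℕ) (t c : Fin n → ℝ) (z : ℝ) :
    Integrable (fun ω => Real.cos (z * (∑ i, c i * B (t i) ω))) P := by
  have hVm : AEMeasurable (fun ω => ∑ i, c i * B (t i) ω) P :=
    Finset.aemeasurable_fun_sum _ fun i _ => (fbm_aemeasurable hB (t i)).const_mul _
  refine (integrable_const (1:ℝ)).mono'
    (Real.measurable_cos.comp_aemeasurable (hVm.const_mul z)).aestronglyMeasurable
    (ae_of_all _ fun ω => ?_)
  rw [Real.norm_eq_abs]
  exact Real.abs_cos_le_one _

lemma fbm_sq (hB : IsFBM1 H P B) [IsProbabilityMeasure P] (n : ℕ) (t c : Fin n → ℝ) :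
    Integrable (fun ω => (∑ i, c i * B (t i) ω)^2) P ∧
    ∫ ω, (∑ i, c i * B (t i) ω)^2 ∂P = ∑ i, ∑ i', c i * c i' * fbmCov H (t i) (t i') := by
  set V : Ω → ℝ := fun ω => ∑ i, c i * B (t i) ω with hV
  set Q : ℝ := ∑ i, ∑ i', c i * c i' * fbmCov H (t i) (t i') with hQdef
  have hVm : AEMeasurable V P :=
    Finset.aemeasurable_fun_sum _ fun i _ => (fbm_aemeasurable hB (t i)).const_mul _
  have hchar : ∀ z : ℝ, ∫ ω, Real.cos (z * V ω) ∂P = Real.exp (-(Q * z^2)/2) :=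
    fun z => fbm_cos hB n t c z
  have hcint : ∀ z : ℝ, Integrable (fun ω => Real.cos (z * V ω)) P :=
    fun z => fbm_cos_integrable hB n t c z
  -- Q ≥ 0
  have hQ0 : 0 ≤ Q := by
    have h1 := hchar 1
    have h2 : ∫ ω, Real.cos (1 * V ω) ∂P ≤ ∫ _ω, (1:ℝ) ∂P :=
      integral_mono (hcint 1) (integrable_const 1) (fun ω => Real.cos_le_one _)
    rw [h1, integral_const, probReal_univ] at h2
    simp at h2
    linarith
  -- real integral identity
  have hreal : ∀ z : ℝ, ∫ ω, 2*(1 - Real.cos (z * V ω))/z^2 ∂P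
      = 2*(1 - Real.exp (-(Q * z^2)/2))/z^2 := by
    intro z
    rw [integral_div, integral_const_mul, integral_sub (integrable_const 1) (hcint z),
      integral_const, probReal_univ, hchar z]
    simp
  have hintg : ∀ z : ℝ, Integrable (fun ω => 2*(1 - Real.cos (z * V ω))/z^2) P := fun z =>
    (((integrable_const (1:ℝ)).sub (hcint z)).const_mul 2).div_const _
  have hnn : ∀ z : ℝ, ∀ ω, 0 ≤ 2*(1 - Real.cos (z * V ω))/z^2 := fun z ω =>
    div_nonneg (by nlinarith [Real.cos_le_one (z * V ω)]) (sq_nonneg z)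
  have hlin : ∀ z : ℝ, ∫⁻ ω, ENNReal.ofReal (2*(1 - Real.cos (z * V ω))/z^2) ∂P
      = ENNReal.ofReal (2*(1 - Real.exp (-(Q * z^2)/2))/z^2) := by
    intro z
    rw [← ofReal_integral_eq_lintegral_ofReal (hintg z) (ae_of_all _ (hnn z)), hreal z]
  -- the sequence z_k = 1/(k+1)
  set u : ℕ → ℝ := fun k => ((k:ℝ)+1)⁻¹ with hu
  have hu0 : ∀ k, u k ≠ 0 := fun k => by positivity
  have hupos : ∀ k, 0 < u k := fun k => by positivity
  have hulim : Tendsto u atTop (𝓝 0) := by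
    rw [hu]
    exact tendsto_one_div_add_atTop_nhds_zero_nat.congr (fun k => by rw [one_div])
  -- limit of the RHS sequence
  have hRlim : Tendsto (fun k => 2*(1 - Real.exp (-(Q * (u k)^2)/2))/(u k)^2) atTop (𝓝 Q) := by
    have hderiv : HasDerivAt (fun x : ℝ => Real.exp (-(Q * x)/2)) (-(Q/2)) 0 := by
      have h1 : HasDerivAt (fun x : ℝ => -(Q * x)/2) (-(Q/2)) 0 := by
        have h0 : HasDerivAt (fun x : ℝ => -(Q/2) * x) (-(Q/2)) 0 := by
          simpa using (hasDerivAt_id (0:ℝ)).const_mul (-(Q/2))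
        have hfeq : (fun x : ℝ => -(Q * x)/2) = fun x : ℝ => -(Q/2) * x :=
          funext fun x => by ring
        rw [hfeq]
        exact h0
      have h2 := h1.exp
      simp only [mul_zero, neg_zero, zero_div, Real.exp_zero, one_mul] at h2
      exact h2
    have hslope := hasDerivAt_iff_tendsto_slope.mp hderiv
    have hg : Tendsto (fun x : ℝ => 2*(1 - Real.exp (-(Q * x)/2))/x) (𝓝[≠] 0) (𝓝 Q) := by
      have h2 : Tendsto (fun x : ℝ => (-2) * slope (fun y => Real.exp (-(Q * y)/2)) 0 x)
          (𝓝[≠] 0) (𝓝 ((-2) * (-(Q/2)))) := hslope.const_mul (-2)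
      have h3 : (fun x : ℝ => (-2) * slope (fun y => Real.exp (-(Q * y)/2)) 0 x)
          =ᶠ[𝓝[≠] (0:ℝ)] (fun x : ℝ => 2*(1 - Real.exp (-(Q * x)/2))/x) := by
        filter_upwards [self_mem_nhdsWithin] with x hx
        have hx0 : x ≠ 0 := hx
        rw [slope_def_field]
        field_simp
        simp only [mul_zero, zero_div, neg_zero, Real.exp_zero]; ring
      rw [show ((-2:ℝ) * -(Q/2)) = Q by ring] at h2
      exact h2.congr' h3
    have hcomp : Tendsto (fun k => (u k)^2) atTop (𝓝[≠] 0) := by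
      refine tendsto_nhdsWithin_of_tendsto_nhds_of_eventually_within _ ?_ ?_
      · have := hulim.pow 2
        simpa using this
      · exact Eventually.of_forall fun k => pow_ne_zero 2 (hu0 k)
    exact hg.comp hcomp
  -- pointwise limit
  have hpt : ∀ ω, Tendsto (fun k => 2*(1 - Real.cos (u k * V ω))/(u k)^2) atTop
      (𝓝 ((V ω)^2)) := by
    intro ω
    rcases eq_or_ne (V ω) 0 with hv | hv
    · rw [hv]
      simp only [mul_zero, Real.cos_zero, sub_self, zero_div]
      simpa using tendsto_const_nhds
    · have hsin : Tendsto (fun x : ℝ => Real.sin x / x) (𝓝[≠] 0) (𝓝 1) := by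
        have := hasDerivAt_iff_tendsto_slope.mp (Real.hasDerivAt_sin 0)
        rw [Real.cos_zero] at this
        refine this.congr' ?_
        filter_upwards [self_mem_nhdsWithin] with x hx
        rw [slope_def_field]
        simp [Real.sin_zero]
      have hcomp : Tendsto (fun k => u k * V ω / 2) atTop (𝓝[≠] 0) := by
        refine tendsto_nhdsWithin_of_tendsto_nhds_of_eventually_within _ ?_ ?_
        · have h5 : Tendsto (fun k => u k * V ω / 2) atTop (𝓝 (0 * V ω / 2)) :=
            Filter.Tendsto.div_const (hulim.mul_const (V ω)) 2
          simpa using h5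
        · refine Eventually.of_forall fun k => ?_
          simp only [Set.mem_compl_iff, Set.mem_singleton_iff]
          exact div_ne_zero (mul_ne_zero (hu0 k) hv) two_ne_zero
      have h6 : Tendsto (fun k => (V ω)^2 * (Real.sin (u k * V ω / 2) / (u k * V ω / 2))^2)
          atTop (𝓝 ((V ω)^2)) := by
        have := ((hsin.comp hcomp).pow 2).const_mul ((V ω)^2)
        simpa using this
      refine h6.congr fun k => ?_
      have hz := hu0 k
      have hhalf : 1 - Real.cos (u k * V ω) = 2 * Real.sin (u k * V ω / 2)^2 := by
        have h1 := Real.cos_two_mul' (u k * V ω / 2)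
        have h2 := Real.sin_sq_add_cos_sq (u k * V ω / 2)
        rw [show 2 * (u k * V ω / 2) = u k * V ω by ring] at h1
        linarith
      rw [div_pow, hhalf]
      field_simp
  -- Fatou and squeeze: the lintegral of V² equals ofReal Q
  have hL : ∫⁻ ω, ENNReal.ofReal ((V ω)^2) ∂P = ENNReal.ofReal Q := by
    have hmle : ∀ k : ℕ, ∫⁻ ω, ENNReal.ofReal (2*(1 - Real.cos (u k * V ω))/(u k)^2) ∂P
        ≤ ∫⁻ ω, ENNReal.ofReal ((V ω)^2) ∂P := by
      intro k
      refine lintegral_mono fun ω => ENNReal.ofReal_le_ofReal ?_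
      have h7 : 1 - Real.cos (u k * V ω) ≤ (u k * V ω)^2/2 := by
        have := Real.one_sub_sq_div_two_le_cos (x := u k * V ω)
        linarith
      rw [div_le_iff₀ (by positivity : (0:ℝ) < (u k)^2)]
      nlinarith [sq_nonneg (V ω), sq_nonneg (u k)]
    -- upper bound of ofReal Q
    have hub : ENNReal.ofReal Q ≤ ∫⁻ ω, ENNReal.ofReal ((V ω)^2) ∂P := by
      have h8 : Tendsto (fun k => ENNReal.ofReal (2*(1 - Real.exp (-(Q * (u k)^2)/2))/(u k)^2))
          atTop (𝓝 (ENNReal.ofReal Q)) :=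
        (ENNReal.continuous_ofReal.tendsto _).comp hRlim
      refine le_of_tendsto h8 (Eventually.of_forall fun k => ?_)
      rw [← hlin (u k)]
      exact hmle k
    have hlb : ∫⁻ ω, ENNReal.ofReal ((V ω)^2) ∂P ≤ ENNReal.ofReal Q := by
      have hfm : ∀ k : ℕ, AEMeasurable
          (fun ω => ENNReal.ofReal (2*(1 - Real.cos (u k * V ω))/(u k)^2)) P := fun k =>
        ENNReal.measurable_ofReal.comp_aemeasurable
          ((((aemeasurable_const.sub ((Real.measurable_cos.comp_aemeasurable
            (hVm.const_mul (u k))))).const_mul 2).div_const _))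
      have hFatou := lintegral_liminf_le' (u := atTop) hfm
      have hptE : ∀ ω, Tendsto (fun k => ENNReal.ofReal (2*(1 - Real.cos (u k * V ω))/(u k)^2))
          atTop (𝓝 (ENNReal.ofReal ((V ω)^2))) := fun ω =>
        (ENNReal.continuous_ofReal.tendsto _).comp (hpt ω)
      have h9 : ∫⁻ ω, ENNReal.ofReal ((V ω)^2) ∂P
          = ∫⁻ ω, liminf (fun k => ENNReal.ofReal (2*(1 - Real.cos (u k * V ω))/(u k)^2)) atTop ∂P := by
        refine lintegral_congr fun ω => ?_
        rw [(hptE ω).liminf_eq]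
      rw [h9]
      refine le_trans hFatou ?_
      have h10 : Tendsto (fun k => ∫⁻ ω, ENNReal.ofReal (2*(1 - Real.cos (u k * V ω))/(u k)^2) ∂P)
          atTop (𝓝 (ENNReal.ofReal Q)) := by
        have : (fun k => ∫⁻ ω, ENNReal.ofReal (2*(1 - Real.cos (u k * V ω))/(u k)^2) ∂P)
            = fun k => ENNReal.ofReal (2*(1 - Real.exp (-(Q * (u k)^2)/2))/(u k)^2) :=
          funext fun k => hlin (u k)
        rw [this]
        exact (ENNReal.continuous_ofReal.tendsto _).comp hRlim
      rw [h10.liminf_eq]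
    exact le_antisymm hlb hub
  -- conclude
  have hVsm : AEStronglyMeasurable (fun ω => (V ω)^2) P :=
    ((hVm.pow_const 2)).aestronglyMeasurable
  have hint : Integrable (fun ω => (V ω)^2) P := by
    refine ⟨hVsm, ?_⟩
    rw [hasFiniteIntegral_iff_ofReal (ae_of_all _ fun ω => sq_nonneg (V ω))]
    rw [hL]
    exact ENNReal.ofReal_lt_top
  refine ⟨hint, ?_⟩
  rw [integral_eq_lintegral_of_nonneg_ae (ae_of_all _ fun ω => sq_nonneg (V ω)) hVsm, hL,
    ENNReal.toReal_ofReal hQ0]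

lemma fbmCov_symm (u v : ℝ) : fbmCov H u v = fbmCov H v u := by
  unfold fbmCov
  rw [abs_sub_comm]
  ring

lemma fbm_mul (hB : IsFBM1 H P B) [IsProbabilityMeasure P] (n : ℕ) (t c d : Fin n → ℝ) :
    Integrable (fun ω => (∑ i, c i * B (t i) ω) * (∑ i, d i * B (t i) ω)) P ∧
    ∫ ω, (∑ i, c i * B (t i) ω) * (∑ i, d i * B (t i) ω) ∂P
      = ∑ i, ∑ i', c i * d i' * fbmCov H (t i) (t i') := by
  obtain ⟨hip, hep⟩ := fbm_sq hB n t (fun i => c i + d i)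
  obtain ⟨him, hem⟩ := fbm_sq hB n t (fun i => c i - d i)
  have hplus : ∀ ω, ∑ i, (c i + d i) * B (t i) ω
      = (∑ i, c i * B (t i) ω) + (∑ i, d i * B (t i) ω) := fun ω => by
    rw [← Finset.sum_add_distrib]
    exact Finset.sum_congr rfl fun i _ => by ring
  have hminus : ∀ ω, ∑ i, (c i - d i) * B (t i) ω
      = (∑ i, c i * B (t i) ω) - (∑ i, d i * B (t i) ω) := fun ω => by
    rw [← Finset.sum_sub_distrib]
    exact Finset.sum_congr rfl fun i _ => by ring
  have hfun : (fun ω => (∑ i, c i * B (t i) ω) * (∑ i, d i * B (t i) ω))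
      = fun ω => ((∑ i, (c i + d i) * B (t i) ω)^2 - (∑ i, (c i - d i) * B (t i) ω)^2)/4 :=
    funext fun ω => by rw [hplus ω, hminus ω]; ring
  -- quadratic form algebra
  have hswap : ∑ i, ∑ i', d i * c i' * fbmCov H (t i) (t i')
      = ∑ i, ∑ i', c i * d i' * fbmCov H (t i) (t i') := by
    rw [Finset.sum_comm]
    exact Finset.sum_congr rfl fun i _ => Finset.sum_congr rfl fun i' _ => by
      rw [fbmCov_symm]; ring
  have hQ : (∑ i, ∑ i', (c i + d i) * (c i' + d i') * fbmCov H (t i) (t i')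
      - ∑ i, ∑ i', (c i - d i) * (c i' - d i') * fbmCov H (t i) (t i'))/4
      = ∑ i, ∑ i', c i * d i' * fbmCov H (t i) (t i') := by
    rw [← Finset.sum_sub_distrib]
    simp_rw [← Finset.sum_sub_distrib]
    have key : ∀ i : Fin n, ∀ i' : Fin n,
        (c i + d i) * (c i' + d i') * fbmCov H (t i) (t i')
          - (c i - d i) * (c i' - d i') * fbmCov H (t i) (t i')
        = 2 * (c i * d i' * fbmCov H (t i) (t i'))
          + 2 * (d i * c i' * fbmCov H (t i) (t i')) := fun i i' => by ring
    simp_rw [key, Finset.sum_add_distrib, ← Finset.mul_sum]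
    rw [hswap]
    ring
  constructor
  · rw [hfun]
    exact (hip.sub him).div_const 4
  · rw [hfun, integral_div, integral_sub hip him, hep, hem, hQ]


end Aux

theorem stmt11 {Ω : Type*} [MeasurableSpace Ω] (P : Measure Ω) [IsProbabilityMeasure P]
    (H : ℝ) (hH : H ∈ Set.Ioo (0:ℝ) 1) (B : ℝ → Ω → ℝ) (hB : IsFBM1 H P B) :
    ∃ C : ℝ, 0 < C ∧ ∀ ε : ℝ, 0 < ε → ∀ s t : ℝ, 0 < s → s < t →
      |∫ ω, ((B (t + ε) ω - B (t - ε) ω) / (2 * ε)) * (B t ω - B s ω) ∂P| ≤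
        C * |t - s| ^ (2 * H - 1) := by
  obtain ⟨hH0, hH1⟩ := hH
  refine ⟨5, by norm_num, ?_⟩
  intro ε hε s t hs hst
  have hd : 0 < t - s := by linarith
  set tt : Fin 4 → ℝ := ![t+ε, t-ε, t, s] with htt
  set cX : Fin 4 → ℝ := ![(2*ε)⁻¹, -(2*ε)⁻¹, 0, 0] with hcX
  set cY : Fin 4 → ℝ := ![0, 0, 1, -1] with hcY
  obtain ⟨_hint, heq⟩ := fbm_mul hB 4 tt cX cY
  have hfun : (fun ω => ((B (t + ε) ω - B (t - ε) ω) / (2 * ε)) * (B t ω - B s ω))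
      = fun ω => (∑ i, cX i * B (tt i) ω) * (∑ i, cY i * B (tt i) ω) := by
    funext ω
    simp only [Fin.sum_univ_four, htt, hcX, hcY, Matrix.cons_val_zero, Matrix.cons_val_one,
      Matrix.head_cons, Matrix.cons_val_two, Matrix.tail_cons, Matrix.cons_val_three]
    have h2ε : (2*ε) ≠ 0 := by positivity
    field_simp
    ring
  rw [hfun, heq]
  have hR : (∑ i, ∑ i', cX i * cY i' * fbmCov H (tt i) (tt i'))
      = ((t - s + ε) ^ (2*H) - |t - s - ε| ^ (2*H))/(4*ε) := by
    simp only [Fin.sum_univ_four, htt, hcX, hcY, Matrix.cons_val_zero, Matrix.cons_val_one,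
      Matrix.head_cons, Matrix.cons_val_two, Matrix.tail_cons, Matrix.cons_val_three]
    unfold fbmCov
    rw [show t + ε - t = ε by ring, show t - ε - t = -ε by ring,
      show t - ε - s = t - s - ε by ring, show t + ε - s = t - s + ε by ring,
      abs_of_pos hε, abs_neg, abs_of_pos hε, abs_of_pos (by linarith : (0:ℝ) < t - s + ε)]
    have h2ε : (2*ε) ≠ 0 := by positivity
    field_simp
    ring
  rw [hR]
  have hN0 := anal_nonneg (2*H) (t-s) ε (by linarith) hd hε
  have hNb := anal_bound (2*H) (t-s) ε (by linarith) (by linarith) hd hε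
  have habs : |t - s| = t - s := abs_of_pos hd
  rw [habs, abs_of_nonneg (by positivity : (0:ℝ) ≤ ((t - s + ε) ^ (2*H) - |t - s - ε| ^ (2*H))/(4*ε))]
  rw [div_le_iff₀ (by positivity : (0:ℝ) < 4*ε)]
  have hdn : (0:ℝ) ≤ (t-s) ^ (2*H-1) := Real.rpow_nonneg hd.le _
  nlinarith [mul_nonneg hdn hε.le]
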